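/- Let F be the cumulative distribution function of the standard Gaussian measure on ℝ, φ = F' its density, and U = φ ∘ F⁻¹ the Gaussian isoperimetry function on (0,1). Then U is twice differentiable on (0,1) and satisfies the differential equation U''(x) = −1/U(x) for every x ∈ (0,1). -/

import Mathlib

open MeasureTheory Set Filter Real

/-- The standard Gaussian density `φ(t) = (2π)^{−1/2} e^{−t²/2}`. -/
noncomputable def gaussPdf (t : ℝ) : ℝ :=
  (Real.sqrt (2 * Real.pi))⁻¹ * Real.exp (-t ^ 2 / 2)

/-- The standard Gaussian cumulative distribution function
`F(t) = ∫_{−∞}^{t} (2π)^{−1/2} e^{−s²/2} ds`. -/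
noncomputable def gaussCdf (t : ℝ) : ℝ :=
  ∫ s in Set.Iic t, gaussPdf s

/-- The inverse `F⁻¹ : (0,1) → ℝ` of the standard Gaussian cdf. -/
noncomputable def gaussCdfInv : ℝ → ℝ :=
  Function.invFun gaussCdf

/-- The Gaussian isoperimetry function `U = φ ∘ F⁻¹` on `(0,1)`. -/
noncomputable def isoU (x : ℝ) : ℝ :=
  gaussPdf (gaussCdfInv x)

lemma gaussPdf_eq : gaussPdf = fun t => (Real.sqrt (2 * Real.pi))⁻¹ * Real.exp (-(1/2) * t ^ 2) := by
  funext t; unfold gaussPdf; ring_nf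

lemma gaussPdf_pos (t : ℝ) : 0 < gaussPdf t := by
  have : 0 < Real.sqrt (2 * Real.pi) := Real.sqrt_pos.2 (by positivity)
  exact mul_pos (inv_pos.2 this) (Real.exp_pos _)

lemma continuous_gaussPdf : Continuous gaussPdf := by
  rw [gaussPdf_eq]; fun_prop

lemma integrable_gaussPdf : Integrable gaussPdf := by
  rw [gaussPdf_eq]
  exact (integrable_exp_neg_mul_sq (by norm_num)).const_mul _

lemma integral_gaussPdf : ∫ t, gaussPdf t = 1 := by
  rw [gaussPdf_eq]
  rw [MeasureTheory.integral_const_mul, integral_gaussian]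
  rw [show Real.pi / (1/2) = 2 * Real.pi by ring]
  rw [inv_mul_cancel₀]
  exact ne_of_gt (Real.sqrt_pos.2 (by positivity))

lemma hasDerivAt_gaussPdf (t : ℝ) : HasDerivAt gaussPdf (-t * gaussPdf t) t := by
  have h : HasDerivAt (fun s : ℝ => -(1/2) * s ^ 2) (-(1/2) * (2 * t)) t := by
    simpa using ((hasDerivAt_pow 2 t).const_mul (-(1/2):ℝ))
  have := (h.exp).const_mul ((Real.sqrt (2 * Real.pi))⁻¹)
  rw [gaussPdf_eq]
  refine this.congr_deriv ?_
  beta_reduce; ring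

lemma hasDerivAt_gaussCdf (t : ℝ) : HasDerivAt gaussCdf (gaussPdf t) t := by
  have heq : gaussCdf = fun y => gaussCdf 0 + ∫ s in (0:ℝ)..y, gaussPdf s := by
    funext y
    have h := intervalIntegral.integral_Iic_sub_Iic (f := gaussPdf) (μ := volume)
      (a := 0) (b := y) integrable_gaussPdf.integrableOn integrable_gaussPdf.integrableOn
    simp only [gaussCdf]
    linarith
  rw [heq]
  exact (intervalIntegral.integral_hasDerivAt_right
    (continuous_gaussPdf.intervalIntegrable _ _)
    (continuous_gaussPdf.stronglyMeasurableAtFilter _ _)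
    continuous_gaussPdf.continuousAt).const_add _

lemma strictMono_gaussCdf : StrictMono gaussCdf :=
  strictMono_of_hasDerivAt_pos (fun t => hasDerivAt_gaussCdf t) (fun t => gaussPdf_pos t)

lemma tendsto_gaussCdf_atTop : Tendsto gaussCdf atTop (nhds 1) := by
  have := (MeasureTheory.aecover_Iic (μ := volume) (l := atTop) (b := fun t : ℝ => t)
    tendsto_id).integral_tendsto_of_countably_generated integrable_gaussPdf
  rw [integral_gaussPdf] at this
  exact this

lemma tendsto_gaussCdf_atBot : Tendsto gaussCdf atBot (nhds 0) := by
  have h := (MeasureTheory.aecover_Ioi (μ := volume) (l := atBot) (a := fun t : ℝ => t)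
    tendsto_id).integral_tendsto_of_countably_generated integrable_gaussPdf
  have heq : ∀ t : ℝ, gaussCdf t = 1 - ∫ s in Ioi t, gaussPdf s := by
    intro t
    have := intervalIntegral.integral_Iic_add_Ioi (f := gaussPdf) (μ := volume) (b := t)
      integrable_gaussPdf.integrableOn integrable_gaussPdf.integrableOn
    rw [integral_gaussPdf] at this
    simp only [gaussCdf]; linarith
  simp only [funext heq]
  have : Tendsto (fun t : ℝ => 1 - ∫ s in Ioi t, gaussPdf s) atBot (nhds (1 - 1)) :=
    (tendsto_const_nhds).sub (by simpa [integral_gaussPdf] using h)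
  simpa using this

lemma gaussCdf_mem_Ioo (t : ℝ) : gaussCdf t ∈ Set.Ioo (0:ℝ) 1 := by
  constructor
  · have h1 : (0:ℝ) ≤ gaussCdf (t - 1) := by
      refine le_of_tendsto tendsto_gaussCdf_atBot ?_
      filter_upwards [eventually_le_atBot (t - 1)] with u hu
      exact strictMono_gaussCdf.monotone hu
    exact lt_of_le_of_lt h1 (strictMono_gaussCdf (by linarith))
  · have h1 : gaussCdf (t + 1) ≤ 1 := by
      refine ge_of_tendsto tendsto_gaussCdf_atTop ?_
      filter_upwards [eventually_ge_atTop (t + 1)] with u hu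
      exact strictMono_gaussCdf.monotone hu
    exact lt_of_lt_of_le (strictMono_gaussCdf (by linarith)) h1

lemma gaussCdf_surjOn : ∀ x ∈ Set.Ioo (0:ℝ) 1, ∃ t, gaussCdf t = x := by
  intro x hx
  obtain ⟨a, ha⟩ : ∃ a, gaussCdf a < x := by
    have := tendsto_gaussCdf_atBot.eventually_lt_const hx.1
    exact this.exists
  obtain ⟨b, hb⟩ : ∃ b, x < gaussCdf b := by
    have := tendsto_gaussCdf_atTop.eventually_const_lt hx.2
    exact this.exists
  have hab : a ≤ b := le_of_lt (strictMono_gaussCdf.lt_iff_lt.1 (lt_trans ha hb))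
  obtain ⟨t, _, ht⟩ := intermediate_value_Icc hab
    (fun t _ => (hasDerivAt_gaussCdf t).continuousAt.continuousWithinAt)
    ⟨le_of_lt ha, le_of_lt hb⟩
  exact ⟨t, ht⟩

lemma gaussCdf_gaussCdfInv {x : ℝ} (hx : x ∈ Set.Ioo (0:ℝ) 1) :
    gaussCdf (gaussCdfInv x) = x := by
  obtain ⟨t, ht⟩ := gaussCdf_surjOn x hx
  exact Function.invFun_eq ⟨t, ht⟩

lemma gaussCdfInv_gaussCdf (t : ℝ) : gaussCdfInv (gaussCdf t) = t :=
  Function.leftInverse_invFun strictMono_gaussCdf.injective t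

lemma continuousAt_gaussCdfInv {x : ℝ} (hx : x ∈ Set.Ioo (0:ℝ) 1) :
    ContinuousAt gaussCdfInv x := by
  have hmono : StrictMonoOn gaussCdfInv (Set.Ioo 0 1) := by
    intro y hy z hz hyz
    obtain ⟨a, ha⟩ := gaussCdf_surjOn y hy
    obtain ⟨b, hb⟩ := gaussCdf_surjOn z hz
    rw [← ha, ← hb, gaussCdfInv_gaussCdf, gaussCdfInv_gaussCdf]
    rw [← ha, ← hb] at hyz
    exact strictMono_gaussCdf.lt_iff_lt.1 hyz
  refine hmono.continuousAt_of_image_mem_nhds (isOpen_Ioo.mem_nhds hx) ?_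
  have : gaussCdfInv '' (Set.Ioo 0 1) = Set.univ := by
    apply Set.eq_univ_of_forall
    intro t
    refine ⟨gaussCdf t, ?_, gaussCdfInv_gaussCdf t⟩
    exact gaussCdf_mem_Ioo t
  rw [this]
  exact Filter.univ_mem

lemma hasDerivAt_gaussCdfInv {x : ℝ} (hx : x ∈ Set.Ioo (0:ℝ) 1) :
    HasDerivAt gaussCdfInv (gaussPdf (gaussCdfInv x))⁻¹ x := by
  refine HasDerivAt.of_local_left_inverse (continuousAt_gaussCdfInv hx)
    (hasDerivAt_gaussCdf _) (ne_of_gt (gaussPdf_pos _)) ?_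
  filter_upwards [isOpen_Ioo.mem_nhds hx] with y hy
  exact gaussCdf_gaussCdfInv hy

lemma hasDerivAt_isoU {x : ℝ} (hx : x ∈ Set.Ioo (0:ℝ) 1) :
    HasDerivAt isoU (-(gaussCdfInv x)) x := by
  have h := (hasDerivAt_gaussPdf (gaussCdfInv x)).comp x (hasDerivAt_gaussCdfInv hx)
  have : -gaussCdfInv x * gaussPdf (gaussCdfInv x) * (gaussPdf (gaussCdfInv x))⁻¹
      = -(gaussCdfInv x) := by
    rw [mul_assoc, mul_inv_cancel₀ (ne_of_gt (gaussPdf_pos _)), mul_one]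
  rw [this] at h
  exact h

/-- The Gaussian isoperimetry function `U = φ ∘ F⁻¹` is twice
differentiable on `(0,1)` and satisfies `U''(x) = −1/U(x)` for every `x ∈ (0,1)`. -/
theorem isoU_second_deriv (x : ℝ) (hx : x ∈ Set.Ioo (0 : ℝ) 1) :
    DifferentiableAt ℝ isoU x ∧ HasDerivAt (deriv isoU) (-(1 / isoU x)) x := by
  refine ⟨(hasDerivAt_isoU hx).differentiableAt, ?_⟩
  have heq : deriv isoU =ᶠ[nhds x] fun y => -(gaussCdfInv y) := by
    filter_upwards [isOpen_Ioo.mem_nhds hx] with y hy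
    exact (hasDerivAt_isoU hy).deriv
  have h : HasDerivAt (fun y => -(gaussCdfInv y)) (-(1 / isoU x)) x := by
    have := (hasDerivAt_gaussCdfInv hx).neg
    exact this.congr_deriv (by simp [isoU, one_div])
  exact h.congr_of_eventuallyEq heq
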